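/- Suppose the ruled strip f(t,v) = c(t) + v ξ(t) is developable. Then for all t ∈ I and all v the coefficients of the first fundamental form of f are E(t,v) := f_t · f_t = (sin β(t) − v(β'(t) + κ(t) cos α(t)))² + cos² β(t), F(t,v) := f_t · f_v = cos β(t), and G(t,v) := f_v · f_v = 1; in particular along the curve (v = 0) one has E = 1, F = cos β, G = 1. -/

import Mathlib

noncomputable section
open Real Set
open scoped ContDiff

local notation "⟪" x ", " y "⟫" => @inner ℝ _ _ x y

/-- Euclidean 3-space. -/
abbrev E3 := EuclideanSpace ℝ (Fin 3)

/-- The vector (cross) product of `ℝ³`. -/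
def cross3 (u v : E3) : E3 :=
  (WithLp.equiv 2 (Fin 3 → ℝ)).symm
    ![u 1 * v 2 - u 2 * v 1, u 2 * v 0 - u 0 * v 2, u 0 * v 1 - u 1 * v 0]

lemma cross3_inner_left (u v : E3) : ⟪cross3 u v, u⟫ = 0 := by
  simp [cross3, PiLp.inner_apply, RCLike.inner_apply, Fin.sum_univ_three,
    WithLp.equiv_symm_apply, -inner_self_eq_norm_sq_to_K]; ring

lemma cross3_inner_right (u v : E3) : ⟪cross3 u v, v⟫ = 0 := by
  simp [cross3, PiLp.inner_apply, RCLike.inner_apply, Fin.sum_univ_three,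
    WithLp.equiv_symm_apply, -inner_self_eq_norm_sq_to_K]; ring

lemma cross3_self (u : E3) : cross3 u u = 0 := by
  ext i; fin_cases i <;>
    simp [cross3, WithLp.equiv_symm_apply, -inner_self_eq_norm_sq_to_K] <;> ring

lemma cross3_smul_right (r : ℝ) (u v : E3) : cross3 u (r • v) = r • cross3 u v := by
  ext i; fin_cases i <;>
    simp [cross3, WithLp.equiv_symm_apply, -inner_self_eq_norm_sq_to_K, PiLp.smul_apply, smul_eq_mul] <;> ring

lemma cross3_add_right (u v w : E3) : cross3 u (v + w) = cross3 u v + cross3 u w := by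
  ext i; fin_cases i <;>
    simp [cross3, WithLp.equiv_symm_apply, -inner_self_eq_norm_sq_to_K, PiLp.add_apply] <;> ring

lemma cross3_triple (u v : E3) : cross3 u (cross3 u v) = ⟪u,v⟫ • u - ⟪u,u⟫ • v := by
  ext i; fin_cases i <;>
    simp [cross3, WithLp.equiv_symm_apply, -inner_self_eq_norm_sq_to_K, PiLp.inner_apply, RCLike.inner_apply,
      Fin.sum_univ_three, PiLp.smul_apply, PiLp.sub_apply, smul_eq_mul] <;> ring

lemma cross3_norm_sq (u v : E3) : ⟪cross3 u v, cross3 u v⟫ = ⟪u,u⟫*⟪v,v⟫ - ⟪u,v⟫^2 := by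
  simp [cross3, PiLp.inner_apply, RCLike.inner_apply, Fin.sum_univ_three,
    WithLp.equiv_symm_apply, -inner_self_eq_norm_sq_to_K]; ring

lemma cross3_gram (w u v : E3) : ⟪w, cross3 u v⟫^2 =
    ⟪w,w⟫*(⟪u,u⟫*⟪v,v⟫-⟪u,v⟫^2) - ⟪w,u⟫^2*⟪v,v⟫ - ⟪w,v⟫^2*⟪u,u⟫
      + 2*⟪w,u⟫*⟪w,v⟫*⟪u,v⟫ := by
  simp [cross3, PiLp.inner_apply, RCLike.inner_apply, Fin.sum_univ_three,
    WithLp.equiv_symm_apply, -inner_self_eq_norm_sq_to_K]; ring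

lemma diffAt_cross3 {u v : ℝ → E3} {x : ℝ} (hu : DifferentiableAt ℝ u x)
    (hv : DifferentiableAt ℝ v x) : DifferentiableAt ℝ (fun t => cross3 (u t) (v t)) x := by
  have hui : ∀ i, DifferentiableAt ℝ (fun t => u t i) x := fun i =>
    (differentiableAt_euclidean.mp hu) i
  have hvi : ∀ i, DifferentiableAt ℝ (fun t => v t i) x := fun i =>
    (differentiableAt_euclidean.mp hv) i
  refine differentiableAt_euclidean.mpr fun i => ?_
  simp only [cross3, WithLp.equiv_symm_apply, PiLp.toLp_apply]
  fin_cases i <;>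
    · simp only [Matrix.cons_val_zero, Matrix.cons_val_one, Matrix.head_cons,
        Matrix.cons_val_two, Matrix.tail_cons, Fin.isValue, Fin.zero_eta, Fin.mk_one]
      exact (((hui _).mul (hvi _)).sub ((hui _).mul (hvi _)))

/-- first fundamental form coefficients of a developable strip
`f(t,v) = c(t) + v ξ(t)`:  `E = (sin β - v(β' + κ cos α))² + cos² β`, `F = cos β`,
`G = 1`; in particular along the curve (`v = 0`) one has `E = 1`. -/
theorem stmt2 (a b : ℝ) (hab : a < b)
    (c : ℝ → E3) (hc : ContDiff ℝ ∞ c) (hinj : InjOn c (Icc a b))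
    (harc : ∀ t ∈ Icc a b, ‖deriv c t‖ = 1)
    (κ : ℝ → ℝ) (hκ : ∀ t, κ t = ‖deriv (deriv c) t‖)
    (hκpos : ∀ t ∈ Icc a b, 0 < κ t)
    (e n bi : ℝ → E3) (τ : ℝ → ℝ)
    (he : ∀ t, e t = deriv c t)
    (hn : ∀ t, n t = (κ t)⁻¹ • deriv (deriv c) t)
    (hbi : ∀ t, bi t = cross3 (e t) (n t))
    (hτ : ∀ t, τ t = ⟪deriv n t, bi t⟫)
    (α β : ℝ → ℝ) (hα : ContDiff ℝ ∞ α) (hβ : ContDiff ℝ ∞ β)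
    (hα1 : ∀ t ∈ Icc a b, 0 < |α t| ∧ |α t| < π / 2)
    (hβ1 : ∀ t ∈ Icc a b, 0 < β t ∧ β t < π)
    (ξ : ℝ → E3)
    (hξ : ∀ t, ξ t = cos (β t) • e t +
      sin (β t) • (cos (α t) • n t + sin (α t) • bi t))
    (f : ℝ → ℝ → E3) (hf : ∀ t v, f t v = c t + v • ξ t)
    (hdev : ∀ t ∈ Icc a b, ⟪cross3 (deriv c t) (ξ t), deriv ξ t⟫ = 0) :
    ∀ t ∈ Icc a b, ∀ v : ℝ,
      ⟪deriv (fun s => f s v) t, deriv (fun s => f s v) t⟫ =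
        (sin (β t) - v * (deriv β t + κ t * cos (α t))) ^ 2 + cos (β t) ^ 2 ∧
      ⟪deriv (fun s => f s v) t, deriv (fun w => f t w) v⟫ = cos (β t) ∧
      ⟪deriv (fun w => f t w) v, deriv (fun w => f t w) v⟫ = 1 ∧
      ⟪deriv (fun s => f s 0) t, deriv (fun s => f s 0) t⟫ = 1 := by
  intro t ht v
  set C1 := deriv c with hC1def
  set C2 := deriv C1 with hC2def
  -- differentiability of everything
  have hC1c : ContDiff ℝ ∞ C1 := (contDiff_infty_iff_deriv.mp hc).2
  have hC2c : ContDiff ℝ ∞ C2 := (contDiff_infty_iff_deriv.mp hC1c).2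
  have hcd : Differentiable ℝ c := hc.differentiable (by norm_num)
  have hC1d : Differentiable ℝ C1 := hC1c.differentiable (by norm_num)
  have hC2d : Differentiable ℝ C2 := hC2c.differentiable (by norm_num)
  have hαd : Differentiable ℝ α := hα.differentiable (by norm_num)
  have hβd : Differentiable ℝ β := hβ.differentiable (by norm_num)
  have hUD : UniqueDiffWithinAt ℝ (Icc a b) t := uniqueDiffOn_Icc hab t ht
  -- facts about κ and C2 on Icc
  have hC2ne : ∀ s ∈ Icc a b, C2 s ≠ 0 := fun s hs => by
    have h1 := hκpos s hs; rw [hκ s] at h1; exact norm_pos_iff.mp h1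
  have hC2C2 : ∀ s ∈ Icc a b, ⟪C2 s, C2 s⟫ = κ s ^ 2 := fun s hs => by
    rw [real_inner_self_eq_norm_sq, hκ s]
  -- the first two Frenet-type facts on Icc
  have P1 : ∀ s ∈ Icc a b, ⟪C1 s, C1 s⟫ = 1 := fun s hs => by
    rw [real_inner_self_eq_norm_sq, harc s hs]; norm_num
  have P2 : ∀ s ∈ Icc a b, ⟪C2 s, C1 s⟫ = 0 := by
    intro s hs
    have hq : ∀ x, HasDerivAt (fun r => ⟪C1 r, C1 r⟫) (⟪C1 x, C2 x⟫ + ⟪C2 x, C1 x⟫) x :=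
      fun x => ((hC1d x).hasDerivAt).inner ℝ ((hC1d x).hasDerivAt)
    have h2 : derivWithin (fun r => ⟪C1 r, C1 r⟫) (Icc a b) s
        = ⟪C1 s, C2 s⟫ + ⟪C2 s, C1 s⟫ := by
      rw [((hq s).differentiableAt).derivWithin (uniqueDiffOn_Icc hab s hs), (hq s).deriv]
    have h3 : derivWithin (fun r => ⟪C1 r, C1 r⟫) (Icc a b) s = 0 := by
      rw [derivWithin_congr P1 (P1 s hs)]; simp
    rw [h3] at h2
    have := real_inner_comm (C1 s) (C2 s)
    linarith
  -- basis inner products on Icc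
  have hnC1 : ∀ s ∈ Icc a b, ⟪n s, C1 s⟫ = 0 := fun s hs => by
    rw [hn s, real_inner_smul_left, P2 s hs, mul_zero]
  have hnn : ∀ s ∈ Icc a b, ⟪n s, n s⟫ = 1 := fun s hs => by
    rw [hn s, real_inner_smul_left, real_inner_smul_right, hC2C2 s hs]
    have h0 := (hκpos s hs).ne'
    field_simp
  have hnC2 : ∀ s ∈ Icc a b, ⟪n s, C2 s⟫ = κ s := fun s hs => by
    rw [hn s, real_inner_smul_left, hC2C2 s hs]
    have h0 := (hκpos s hs).ne'
    field_simp
  have hbiC1 : ∀ s ∈ Icc a b, ⟪bi s, C1 s⟫ = 0 := fun s hs => by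
    rw [hbi s, he s]; exact cross3_inner_left _ _
  have hbin : ∀ s ∈ Icc a b, ⟪bi s, n s⟫ = 0 := fun s hs => by
    rw [hbi s]; exact cross3_inner_right _ _
  have hbibi : ∀ s ∈ Icc a b, ⟪bi s, bi s⟫ = 1 := fun s hs => by
    rw [hbi s, he s, cross3_norm_sq, P1 s hs, hnn s hs]
    have h0 : ⟪C1 s, n s⟫ = 0 := by rw [real_inner_comm]; exact hnC1 s hs
    rw [h0]; norm_num
  have hbiC2 : ∀ s ∈ Icc a b, ⟪bi s, C2 s⟫ = 0 := fun s hs => by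
    rw [hbi s, he s, hn s, cross3_smul_right, real_inner_smul_left,
      cross3_inner_right, mul_zero]
  -- ξ is a unit field on Icc, and ⟪ξ, C1⟫ = cos β on Icc
  have hunit : ∀ s ∈ Icc a b, ⟪ξ s, ξ s⟫ = 1 := by
    intro s hs
    have h1 : ⟪C1 s, n s⟫ = 0 := by rw [real_inner_comm]; exact hnC1 s hs
    have h2 : ⟪C1 s, bi s⟫ = 0 := by rw [real_inner_comm]; exact hbiC1 s hs
    have h3 : ⟪n s, bi s⟫ = 0 := by rw [real_inner_comm]; exact hbin s hs
    rw [hξ s, he s]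
    simp only [inner_add_left, inner_add_right, real_inner_smul_left, real_inner_smul_right,
      P1 s hs, hnn s hs, hbibi s hs, hnC1 s hs, hbiC1 s hs, hbin s hs, h1, h2, h3]
    have hpa := sin_sq_add_cos_sq (α s)
    have hpb := sin_sq_add_cos_sq (β s)
    linear_combination hpb + sin (β s) ^ 2 * hpa
  have hxc1 : ∀ s ∈ Icc a b, ⟪ξ s, C1 s⟫ = cos (β s) := by
    intro s hs
    rw [hξ s, he s]
    simp only [inner_add_left, real_inner_smul_left, P1 s hs, hnC1 s hs, hbiC1 s hs]
    ring
  -- differentiability of ξ at t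
  have hκt : (0:ℝ) < κ t := hκpos t ht
  have hκdiff : DifferentiableAt ℝ κ t := by
    have hκfun : κ = fun s => ‖C2 s‖ := funext hκ
    rw [hκfun]
    exact (hC2d t).norm ℝ (hC2ne t ht)
  have hndiff : DifferentiableAt ℝ n t := by
    have hnfun : n = fun s => (κ s)⁻¹ • C2 s := funext hn
    rw [hnfun]
    exact (hκdiff.inv hκt.ne').smul (hC2d t)
  have hbidiff : DifferentiableAt ℝ bi t := by
    have hbifun : bi = fun s => cross3 (C1 s) (n s) := funext fun s => by rw [hbi s, he s]
    rw [hbifun]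
    exact diffAt_cross3 (hC1d t) hndiff
  have hξdiff : DifferentiableAt ℝ ξ t := by
    have hξfun : ξ = fun s => cos (β s) • C1 s +
        sin (β s) • (cos (α s) • n s + sin (α s) • bi s) :=
      funext fun s => by rw [hξ s, he s]
    rw [hξfun]
    exact (((hβd t).cos).smul (hC1d t)).add
      (((hβd t).sin).smul ((((hαd t).cos).smul hndiff).add (((hαd t).sin).smul hbidiff)))
  have hξ0 : ξ t = cos (β t) • C1 t + sin (β t) • (cos (α t) • n t + sin (α t) • bi t) := by
    rw [hξ t, he t]
  -- pointwise frame facts at t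
  have hee : ⟪C1 t, C1 t⟫ = 1 := P1 t ht
  have hen : ⟪C1 t, n t⟫ = 0 := by rw [real_inner_comm]; exact hnC1 t ht
  have hnn0 : ⟪n t, n t⟫ = 1 := hnn t ht
  have hpα := sin_sq_add_cos_sq (α t)
  have hpβ := sin_sq_add_cos_sq (β t)
  have hsβ : 0 < sin (β t) := sin_pos_of_pos_of_lt_pi (hβ1 t ht).1 (hβ1 t ht).2
  -- derivative relation R1 : ⟪ξ', ξ⟫ = 0
  have R1 : ⟪deriv ξ t, ξ t⟫ = 0 := by
    have hq : HasDerivAt (fun s => ⟪ξ s, ξ s⟫) (⟪ξ t, deriv ξ t⟫ + ⟪deriv ξ t, ξ t⟫) t :=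
      (hξdiff.hasDerivAt).inner ℝ (hξdiff.hasDerivAt)
    have h2 : derivWithin (fun s => ⟪ξ s, ξ s⟫) (Icc a b) t
        = ⟪ξ t, deriv ξ t⟫ + ⟪deriv ξ t, ξ t⟫ := by
      rw [(hq.differentiableAt).derivWithin hUD, hq.deriv]
    have h3 : derivWithin (fun s => ⟪ξ s, ξ s⟫) (Icc a b) t = 0 := by
      rw [derivWithin_congr hunit (hunit t ht)]; simp
    rw [h3] at h2
    have := real_inner_comm (ξ t) (deriv ξ t)
    linarith
  -- derivative relation R2
  have R2 : ⟪deriv ξ t, C1 t⟫ + ⟪ξ t, C2 t⟫ = -sin (β t) * deriv β t := by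
    have hq : HasDerivAt (fun s => ⟪ξ s, C1 s⟫) (⟪ξ t, C2 t⟫ + ⟪deriv ξ t, C1 t⟫) t :=
      (hξdiff.hasDerivAt).inner ℝ ((hC1d t).hasDerivAt)
    have hcosq : HasDerivAt (fun s => cos (β s)) (-sin (β t) * deriv β t) t :=
      ((hβd t).hasDerivAt).cos
    have h2 : derivWithin (fun s => ⟪ξ s, C1 s⟫) (Icc a b) t
        = ⟪ξ t, C2 t⟫ + ⟪deriv ξ t, C1 t⟫ := by
      rw [(hq.differentiableAt).derivWithin hUD, hq.deriv]
    have h3 : derivWithin (fun s => ⟪ξ s, C1 s⟫) (Icc a b) t = -sin (β t) * deriv β t := by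
      rw [derivWithin_congr hxc1 (hxc1 t ht),
        (hcosq.differentiableAt).derivWithin hUD, hcosq.deriv]
    rw [h3] at h2
    linarith
  have hξE2 : ⟪ξ t, C2 t⟫ = sin (β t) * cos (α t) * κ t := by
    have h1 : ⟪C1 t, C2 t⟫ = 0 := by rw [real_inner_comm]; exact P2 t ht
    have h2 : ⟪n t, C2 t⟫ = κ t := hnC2 t ht
    have h3 : ⟪bi t, C2 t⟫ = 0 := hbiC2 t ht
    rw [hξ0]
    simp only [inner_add_left, real_inner_smul_left, h1, h2, h3]
    ring
  have hT : ⟪deriv ξ t, C1 t⟫ = -sin (β t) * (deriv β t + κ t * cos (α t)) := by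
    linear_combination R2 - hξE2
  -- R1 in components
  have hR1c : cos (β t) * ⟪deriv ξ t, C1 t⟫ + sin (β t) * (cos (α t) * ⟪deriv ξ t, n t⟫
      + sin (α t) * ⟪deriv ξ t, bi t⟫) = 0 := by
    have h0 := R1
    rw [hξ0] at h0
    simp only [inner_add_right, real_inner_smul_right] at h0
    linarith
  -- developability in components
  have hb0 : cross3 (C1 t) (n t) = bi t := by rw [hbi t, he t]
  have hcross : cross3 (C1 t) (ξ t)
      = (sin (β t) * cos (α t)) • bi t - (sin (β t) * sin (α t)) • n t := by
    rw [hξ0, cross3_add_right, cross3_smul_right, cross3_self, smul_zero, zero_add,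
      cross3_smul_right, cross3_add_right, cross3_smul_right, cross3_smul_right, hb0]
    have htrip : cross3 (C1 t) (bi t) = -(n t) := by
      rw [← hb0, cross3_triple, hen, hee]
      simp
    rw [htrip]
    module
  have hR3c : sin (β t) * cos (α t) * ⟪deriv ξ t, bi t⟫
      - sin (β t) * sin (α t) * ⟪deriv ξ t, n t⟫ = 0 := by
    have hd := hdev t ht
    rw [hcross] at hd
    simp only [inner_sub_left, real_inner_smul_left] at hd
    have hcb : ⟪bi t, deriv ξ t⟫ = ⟪deriv ξ t, bi t⟫ := real_inner_comm _ _
    have hcn : ⟪n t, deriv ξ t⟫ = ⟪deriv ξ t, n t⟫ := real_inner_comm _ _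
    rw [hcb, hcn] at hd
    linarith
  -- solve for the components X = ⟪ξ', n⟫ and Y = ⟪ξ', bi⟫
  have h1 : cos (α t) * ⟪deriv ξ t, n t⟫ + sin (α t) * ⟪deriv ξ t, bi t⟫
      = cos (β t) * (deriv β t + κ t * cos (α t)) := by
    have hm : sin (β t) * (cos (α t) * ⟪deriv ξ t, n t⟫ + sin (α t) * ⟪deriv ξ t, bi t⟫)
        = sin (β t) * (cos (β t) * (deriv β t + κ t * cos (α t))) := by
      linear_combination hR1c - cos (β t) * hT
    exact mul_left_cancel₀ hsβ.ne' hm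
  have h2 : cos (α t) * ⟪deriv ξ t, bi t⟫ - sin (α t) * ⟪deriv ξ t, n t⟫ = 0 := by
    have hm : sin (β t) * (cos (α t) * ⟪deriv ξ t, bi t⟫ - sin (α t) * ⟪deriv ξ t, n t⟫)
        = sin (β t) * 0 := by
      linear_combination hR3c
    exact mul_left_cancel₀ hsβ.ne' hm
  have hXY : ⟪deriv ξ t, n t⟫ ^ 2 + ⟪deriv ξ t, bi t⟫ ^ 2
      = cos (β t) ^ 2 * (deriv β t + κ t * cos (α t)) ^ 2 := by
    linear_combination (cos (α t) * ⟪deriv ξ t, n t⟫ + sin (α t) * ⟪deriv ξ t, bi t⟫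
        + cos (β t) * (deriv β t + κ t * cos (α t))) * h1
      + (cos (α t) * ⟪deriv ξ t, bi t⟫ - sin (α t) * ⟪deriv ξ t, n t⟫) * h2
      - (⟪deriv ξ t, n t⟫ ^ 2 + ⟪deriv ξ t, bi t⟫ ^ 2) * hpα
  -- completeness : ⟪ξ',ξ'⟫ = T² + X² + Y²
  have hww : ⟪deriv ξ t, deriv ξ t⟫ = ⟪deriv ξ t, C1 t⟫ ^ 2 + ⟪deriv ξ t, n t⟫ ^ 2
      + ⟪deriv ξ t, bi t⟫ ^ 2 := by
    have hg := cross3_gram (deriv ξ t) (C1 t) (n t)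
    rw [hb0, hee, hnn0, hen] at hg
    linear_combination -hg
  have hwwS : ⟪deriv ξ t, deriv ξ t⟫ = (deriv β t + κ t * cos (α t)) ^ 2 := by
    linear_combination hww
      + (⟪deriv ξ t, C1 t⟫ - sin (β t) * (deriv β t + κ t * cos (α t))) * hT
      + hXY + (deriv β t + κ t * cos (α t)) ^ 2 * hpβ
  -- the E computation for a general parameter u
  have hE : ∀ u : ℝ, ⟪C1 t + u • deriv ξ t, C1 t + u • deriv ξ t⟫
      = (sin (β t) - u * (deriv β t + κ t * cos (α t))) ^ 2 + cos (β t) ^ 2 := by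
    intro u
    simp only [inner_add_left, inner_add_right, real_inner_smul_left, real_inner_smul_right]
    have hc1 : ⟪C1 t, deriv ξ t⟫ = ⟪deriv ξ t, C1 t⟫ := real_inner_comm _ _
    rw [hee, hc1, hwwS]
    linear_combination (2 * u) * hT - hpβ
  -- derivatives of f
  have hft : ∀ u : ℝ, deriv (fun s => f s u) t = C1 t + u • deriv ξ t := by
    intro u
    have hfeq : (fun s => f s u) = fun s => c s + u • ξ s := funext fun s => hf s u
    rw [hfeq]
    exact (((hcd t).hasDerivAt).add ((hξdiff.hasDerivAt).const_smul u)).deriv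
  have hfv : ∀ v' : ℝ, deriv (fun w' => f t w') v' = ξ t := by
    intro v'
    have hfeq : (fun w' => f t w') = fun w' => c t + w' • ξ t := funext (hf t)
    rw [hfeq]
    have hx : HasDerivAt (fun w' : ℝ => c t + w' • ξ t) (0 + (1:ℝ) • ξ t) v' :=
      (hasDerivAt_const v' (c t)).add ((hasDerivAt_id v').smul_const (ξ t))
    rw [hx.deriv]
    simp
  refine ⟨?_, ?_, ?_, ?_⟩
  · rw [hft v]; exact hE v
  · have hc2 : ⟪C1 t, ξ t⟫ = ⟪ξ t, C1 t⟫ := real_inner_comm _ _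
    rw [hft v, hfv v, inner_add_left, real_inner_smul_left, R1, hc2, hxc1 t ht]
    ring
  · rw [hfv v]; exact hunit t ht
  · rw [hft 0, hE 0]
    simp only [zero_mul, sub_zero]
    exact hpβ
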